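/- Let D be the Dirac operator of the fuzzy sphere on ℂ⁴⊗M(n,ℂ), D = γ⁰ + Σ_{j<k} γ⁰γʲγᵏ⊗[L_{jk},·], with the type (1,3) gamma matrices written in block form γ⁰ = [[0,1],[1,0]], γᵃ = [[0,iσᵃ],[−iσᵃ,0]]. Then conjugation by W = (1/√2)[[1,1],[−1,1]] block-diagonalises D as WDW⁻¹ = diag(d̃, −d̃), where d̃ is the Grosse–Presnajder operator; consequently the spectrum of D is symmetric about 0. -/
import Mathlib


open Matrix

/-- The Hilbert space ℂ²⊗M(n,ℂ), encoded as pairs of n×n matrices. -/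
abbrev HGP (n : ℕ) := Fin 2 → Matrix (Fin n) (Fin n) ℂ

/-- The Hilbert space ℂ⁴⊗M(n,ℂ), the spinor index split into two blocks. -/
abbrev H4 (n : ℕ) := (Fin 2 ⊕ Fin 2) → Matrix (Fin n) (Fin n) ℂ

/-- Action of a 2×2 spinor matrix on ℂ²⊗M(n,ℂ). -/
noncomputable def opVE (n : ℕ) (m : Matrix (Fin 2) (Fin 2) ℂ) :
    Module.End ℂ (HGP n) :=
  LinearMap.pi (fun i => ∑ j, m i j • LinearMap.proj j)

/-- Action of a 4×4 spinor matrix on ℂ⁴⊗M(n,ℂ). -/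
noncomputable def opV4E (n : ℕ) (m : Matrix (Fin 2 ⊕ Fin 2) (Fin 2 ⊕ Fin 2) ℂ) :
    Module.End ℂ (H4 n) :=
  LinearMap.pi (fun i => ∑ j, m i j • LinearMap.proj j)

/-- The adjoint action m ↦ [X,m] on ℂ²⊗M(n,ℂ). -/
noncomputable def adLE (n : ℕ) (X : Matrix (Fin n) (Fin n) ℂ) :
    Module.End ℂ (HGP n) :=
  LinearMap.pi (fun i =>
    (LinearMap.mulLeft ℂ X - LinearMap.mulRight ℂ X).comp (LinearMap.proj i))

/-- The adjoint action m ↦ [X,m] on ℂ⁴⊗M(n,ℂ). -/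
noncomputable def adL4E (n : ℕ) (X : Matrix (Fin n) (Fin n) ℂ) :
    Module.End ℂ (H4 n) :=
  LinearMap.pi (fun i =>
    (LinearMap.mulLeft ℂ X - LinearMap.mulRight ℂ X).comp (LinearMap.proj i))

/-- The set of ordered pairs j < k in {1,2,3}. -/
def pairs3 : Finset (Fin 3 × Fin 3) := Finset.univ.filter (fun p => p.1 < p.2)

/-- The Grosse–Presnajder operator d̃ = 1 + Σ_{j<k} σʲσᵏ ⊗ [L_{jk},·]. -/
noncomputable def GPop (n : ℕ) (σ : Fin 3 → Matrix (Fin 2) (Fin 2) ℂ)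
    (L : Fin 3 → Fin 3 → Matrix (Fin n) (Fin n) ℂ) : Module.End ℂ (HGP n) :=
  1 + ∑ p ∈ pairs3, (opVE n (σ p.1 * σ p.2)) * (adLE n (L p.1 p.2))

/-- The type (1,3) gamma matrix γ⁰ in block form. -/
noncomputable def gamma0 : Matrix (Fin 2 ⊕ Fin 2) (Fin 2 ⊕ Fin 2) ℂ :=
  Matrix.fromBlocks 0 1 1 0

/-- The type (1,3) gamma matrices γᵃ in block form. -/
noncomputable def gammaA (σ : Fin 3 → Matrix (Fin 2) (Fin 2) ℂ) (a : Fin 3) :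
    Matrix (Fin 2 ⊕ Fin 2) (Fin 2 ⊕ Fin 2) ℂ :=
  Matrix.fromBlocks 0 (Complex.I • σ a) (-(Complex.I • σ a)) 0

/-- The fuzzy sphere Dirac operator D = γ⁰ + Σ_{j<k} γ⁰γʲγᵏ ⊗ [L_{jk},·]. -/
noncomputable def fuzzyDirac (n : ℕ) (σ : Fin 3 → Matrix (Fin 2) (Fin 2) ℂ)
    (L : Fin 3 → Fin 3 → Matrix (Fin n) (Fin n) ℂ) : Module.End ℂ (H4 n) :=
  opV4E n gamma0 + ∑ p ∈ pairs3,
    (opV4E n (gamma0 * gammaA σ p.1 * gammaA σ p.2)) * (adL4E n (L p.1 p.2))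

/-- The change-of-basis matrix W = (1/√2)[[1,1],[−1,1]]. -/
noncomputable def Wmat : Matrix (Fin 2 ⊕ Fin 2) (Fin 2 ⊕ Fin 2) ℂ :=
  (((Real.sqrt 2 : ℝ) : ℂ))⁻¹ • Matrix.fromBlocks 1 1 (-1) 1

/-- The inverse of W. -/
noncomputable def WmatInv : Matrix (Fin 2 ⊕ Fin 2) (Fin 2 ⊕ Fin 2) ℂ :=
  (((Real.sqrt 2 : ℝ) : ℂ))⁻¹ • Matrix.fromBlocks 1 (-1) 1 1

/-! ### Auxiliary lemmas -/

section Aux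

/-- The chirality matrix diag(1,-1). -/
noncomputable def chiMat : Matrix (Fin 2 ⊕ Fin 2) (Fin 2 ⊕ Fin 2) ℂ :=
  Matrix.fromBlocks 1 0 0 (-1)

lemma opV4E_apply (n : ℕ) (m : Matrix (Fin 2 ⊕ Fin 2) (Fin 2 ⊕ Fin 2) ℂ)
    (ψ : H4 n) (i : Fin 2 ⊕ Fin 2) :
    opV4E n m ψ i = ∑ j, m i j • ψ j := by
  simp [opV4E]

lemma opVE_apply (n : ℕ) (m : Matrix (Fin 2) (Fin 2) ℂ)
    (ψ : HGP n) (i : Fin 2) :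
    opVE n m ψ i = ∑ j, m i j • ψ j := by
  simp [opVE]

lemma adL4E_apply (n : ℕ) (X : Matrix (Fin n) (Fin n) ℂ) (ψ : H4 n)
    (i : Fin 2 ⊕ Fin 2) : adL4E n X ψ i = X * ψ i - ψ i * X := by
  simp [adL4E]

lemma adLE_apply (n : ℕ) (X : Matrix (Fin n) (Fin n) ℂ) (ψ : HGP n)
    (i : Fin 2) : adLE n X ψ i = X * ψ i - ψ i * X := by
  simp [adLE]

lemma opV4E_mul (n : ℕ) (A B : Matrix (Fin 2 ⊕ Fin 2) (Fin 2 ⊕ Fin 2) ℂ) :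
    opV4E n (A * B) = opV4E n A * opV4E n B := by
  refine LinearMap.ext fun ψ => funext fun i => ?_
  simp only [Module.End.mul_apply, opV4E_apply, Matrix.mul_apply,
    Finset.sum_smul, Finset.smul_sum, smul_smul]
  rw [Finset.sum_comm]

lemma opV4E_neg (n : ℕ) (A : Matrix (Fin 2 ⊕ Fin 2) (Fin 2 ⊕ Fin 2) ℂ) :
    opV4E n (-A) = -opV4E n A := by
  refine LinearMap.ext fun ψ => funext fun i => ?_
  simp [opV4E_apply, neg_smul]

lemma opV4E_one (n : ℕ) : opV4E n (1 : Matrix (Fin 2 ⊕ Fin 2) (Fin 2 ⊕ Fin 2) ℂ) = 1 := by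
  refine LinearMap.ext fun ψ => funext fun i => ?_
  simp [opV4E_apply, Matrix.one_apply, ite_smul]

lemma opV4E_adL4E_comm (n : ℕ) (m : Matrix (Fin 2 ⊕ Fin 2) (Fin 2 ⊕ Fin 2) ℂ)
    (X : Matrix (Fin n) (Fin n) ℂ) :
    opV4E n m * adL4E n X = adL4E n X * opV4E n m := by
  refine LinearMap.ext fun ψ => funext fun i => ?_
  simp [Module.End.mul_apply, opV4E_apply, adL4E, Finset.mul_sum, Finset.sum_mul, smul_sub,
    Matrix.mul_smul, Matrix.smul_mul, Finset.sum_sub_distrib, mul_add, add_mul, mul_smul_comm]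

lemma sqrt2_sq : (((Real.sqrt 2 : ℝ) : ℂ))⁻¹ * (((Real.sqrt 2 : ℝ) : ℂ))⁻¹ = 2⁻¹ := by
  rw [← mul_inv, ← Complex.ofReal_mul, Real.mul_self_sqrt (by norm_num)]
  norm_num

lemma half_two {α : Type*} [AddCommGroup α] [Module ℂ α] (x : α) :
    (2⁻¹ : ℂ) • (x + x) = x := by
  rw [← two_smul ℂ, smul_smul]; norm_num

lemma WWinv : Wmat * WmatInv = 1 := by
  rw [Wmat, WmatInv, Matrix.smul_mul, Matrix.mul_smul, smul_smul, sqrt2_sq]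
  simp only [Matrix.fromBlocks_multiply, Matrix.mul_one, Matrix.one_mul,
    Matrix.mul_neg, Matrix.neg_mul, neg_neg, Matrix.mul_zero, Matrix.zero_mul,
    neg_add_cancel, add_neg_cancel, Matrix.fromBlocks_smul, half_two, smul_zero,
    ← Matrix.fromBlocks_one]

lemma WinvW : WmatInv * Wmat = 1 := by
  rw [Wmat, WmatInv, Matrix.smul_mul, Matrix.mul_smul, smul_smul, sqrt2_sq]
  simp only [Matrix.fromBlocks_multiply, Matrix.mul_one, Matrix.one_mul,
    Matrix.mul_neg, Matrix.neg_mul, neg_neg, Matrix.mul_zero, Matrix.zero_mul,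
    neg_add_cancel, add_neg_cancel, Matrix.fromBlocks_smul, half_two, smul_zero,
    ← Matrix.fromBlocks_one]

lemma Wconj (A : Matrix (Fin 2) (Fin 2) ℂ) :
    Wmat * Matrix.fromBlocks 0 A A 0 * WmatInv = Matrix.fromBlocks A 0 0 (-A) := by
  rw [Wmat, WmatInv, Matrix.smul_mul, Matrix.smul_mul, Matrix.mul_smul, smul_smul,
    sqrt2_sq]
  simp only [Matrix.fromBlocks_multiply, Matrix.mul_one, Matrix.one_mul,
    Matrix.mul_neg, Matrix.neg_mul, neg_neg, Matrix.mul_zero, Matrix.zero_mul,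
    zero_add, add_zero, neg_add_cancel, add_neg_cancel, ← neg_add, smul_neg,
    Matrix.fromBlocks_smul, half_two, smul_zero]

lemma gamma_prod (σ : Fin 3 → Matrix (Fin 2) (Fin 2) ℂ) (a b : Fin 3) :
    gamma0 * gammaA σ a * gammaA σ b
      = Matrix.fromBlocks 0 (σ a * σ b) (σ a * σ b) 0 := by
  simp only [gamma0, gammaA, Matrix.fromBlocks_multiply, Matrix.mul_one,
    Matrix.one_mul, Matrix.mul_neg, Matrix.neg_mul, neg_neg, Matrix.mul_zero,
    Matrix.zero_mul, zero_add, add_zero, Matrix.smul_mul, Matrix.mul_smul,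
    smul_smul, Complex.I_mul_I, neg_smul, one_smul, smul_neg]

lemma chi_anti (A : Matrix (Fin 2) (Fin 2) ℂ) :
    chiMat * Matrix.fromBlocks 0 A A 0 = -(Matrix.fromBlocks 0 A A 0 * chiMat) := by
  simp [chiMat, Matrix.fromBlocks_multiply, Matrix.fromBlocks_neg]

lemma chi_sq : chiMat * chiMat = 1 := by
  simp only [chiMat, Matrix.fromBlocks_multiply, Matrix.mul_one, Matrix.one_mul,
    Matrix.mul_neg, Matrix.neg_mul, neg_neg, Matrix.mul_zero, Matrix.zero_mul,
    zero_add, add_zero, neg_zero, ← Matrix.fromBlocks_one]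

lemma gamma0_block : gamma0 = Matrix.fromBlocks 0 (1:Matrix (Fin 2) (Fin 2) ℂ) 1 0 := rfl

/-- The conjugated Dirac operator in block-diagonal form. -/
lemma conjD (n : ℕ) (σ : Fin 3 → Matrix (Fin 2) (Fin 2) ℂ)
    (L : Fin 3 → Fin 3 → Matrix (Fin n) (Fin n) ℂ) :
    opV4E n Wmat * fuzzyDirac n σ L * opV4E n WmatInv
      = opV4E n (Matrix.fromBlocks 1 0 0 (-1)) + ∑ p ∈ pairs3,
        opV4E n (Matrix.fromBlocks (σ p.1 * σ p.2) 0 0 (-(σ p.1 * σ p.2)))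
          * adL4E n (L p.1 p.2) := by
  rw [fuzzyDirac, mul_add, add_mul, Finset.mul_sum, Finset.sum_mul]
  congr 1
  · rw [← opV4E_mul, ← opV4E_mul, gamma0_block, Wconj]
  · refine Finset.sum_congr rfl fun p _ => ?_
    rw [gamma_prod, ← mul_assoc,
      mul_assoc (opV4E n Wmat * opV4E n (Matrix.fromBlocks 0 (σ p.1 * σ p.2) (σ p.1 * σ p.2) 0)),
      ← opV4E_adL4E_comm, ← mul_assoc, ← opV4E_mul, ← opV4E_mul, Wconj]

/-- D anticommutes with the chirality operator. -/
lemma Dchi_anti (n : ℕ) (σ : Fin 3 → Matrix (Fin 2) (Fin 2) ℂ)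
    (L : Fin 3 → Fin 3 → Matrix (Fin n) (Fin n) ℂ) :
    opV4E n chiMat * fuzzyDirac n σ L = -(fuzzyDirac n σ L * opV4E n chiMat) := by
  rw [fuzzyDirac, mul_add, add_mul, Finset.mul_sum, Finset.sum_mul, neg_add]
  congr 1
  · rw [← opV4E_mul, gamma0_block, chi_anti, opV4E_neg, opV4E_mul]
  · rw [← Finset.sum_neg_distrib]
    refine Finset.sum_congr rfl fun p _ => ?_
    rw [gamma_prod, ← mul_assoc, ← opV4E_mul, chi_anti, opV4E_neg, opV4E_mul]
    rw [← opV4E_mul, mul_assoc, ← opV4E_adL4E_comm, ← mul_assoc, ← opV4E_mul]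
    rfl
end Aux

/-- Conjugation by W block-diagonalises the fuzzy sphere Dirac
operator D as WDW⁻¹ = diag(d̃, −d̃), where d̃ is the Grosse–Presnajder operator;
consequently the spectrum of D is symmetric about 0. -/
theorem fuzzy_dirac_block_diagonalisation
    (n : ℕ) (σ : Fin 3 → Matrix (Fin 2) (Fin 2) ℂ)
    (hσ : ∀ j k, σ j * σ k + σ k * σ j =
      if j = k then (-2 : ℂ) • (1 : Matrix (Fin 2) (Fin 2) ℂ) else 0)
    (L : Fin 3 → Fin 3 → Matrix (Fin n) (Fin n) ℂ)
    (hLanti : ∀ j k, L j k = -L k j)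
    (hLrel : ∀ j k l m, L j k * L l m - L l m * L j k =
      (if k = l then (1:ℂ) else 0) • L j m - (if k = m then (1:ℂ) else 0) • L j l
        - (if j = l then (1:ℂ) else 0) • L k m + (if j = m then (1:ℂ) else 0) • L k l) :
    Wmat * WmatInv = 1 ∧ WmatInv * Wmat = 1
    -- WDW⁻¹ = diag(d̃, −d̃)
    ∧ (∀ (ψ : H4 n) (i : Fin 2),
        ((opV4E n Wmat * fuzzyDirac n σ L * opV4E n WmatInv) ψ) (Sum.inl i)
          = (GPop n σ L) (fun j => ψ (Sum.inl j)) i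
        ∧ ((opV4E n Wmat * fuzzyDirac n σ L * opV4E n WmatInv) ψ) (Sum.inr i)
          = -((GPop n σ L) (fun j => ψ (Sum.inr j)) i))
    -- the spectrum of D is symmetric about 0
    ∧ (∀ μ : ℂ, Module.End.HasEigenvalue (fuzzyDirac n σ L) μ →
        Module.End.HasEigenvalue (fuzzyDirac n σ L) (-μ)) := by
  refine ⟨WWinv, WinvW, ?_, ?_⟩
  · intro ψ i
    rw [conjD]
    constructor
    · simp only [LinearMap.add_apply, LinearMap.sum_apply, Pi.add_apply,
        Finset.sum_apply, Module.End.mul_apply, opV4E_apply, adL4E_apply,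
        GPop, Module.End.one_apply, opVE_apply, adLE_apply,
        Fintype.sum_sum_type, Matrix.fromBlocks_apply₁₁, Matrix.fromBlocks_apply₁₂,
        Matrix.zero_apply, zero_smul, Finset.sum_const_zero, add_zero,
        Matrix.one_apply, ite_smul, Finset.sum_ite_eq, Finset.mem_univ, if_true, one_smul]
    · simp only [LinearMap.add_apply, LinearMap.sum_apply, Pi.add_apply,
        Finset.sum_apply, Module.End.mul_apply, opV4E_apply, adL4E_apply,
        GPop, Module.End.one_apply, opVE_apply, adLE_apply,
        Fintype.sum_sum_type, Matrix.fromBlocks_apply₂₁, Matrix.fromBlocks_apply₂₂,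
        Matrix.zero_apply, zero_smul, Finset.sum_const_zero, zero_add,
        Matrix.neg_apply, neg_smul, Finset.sum_neg_distrib, neg_add,
        Matrix.one_apply, ite_smul, Finset.sum_ite_eq, Finset.mem_univ, if_true, one_smul]
  · intro μ hμ
    obtain ⟨ψ, hmem, hne⟩ := hμ.exists_hasEigenvector
    have hDψ : fuzzyDirac n σ L ψ = μ • ψ := Module.End.mem_eigenspace_iff.1 hmem
    have hanti := Dchi_anti n σ L
    refine Module.End.hasEigenvalue_of_hasEigenvector
      (x := opV4E n chiMat ψ) ⟨Module.End.mem_eigenspace_iff.2 ?_, ?_⟩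
    · have : fuzzyDirac n σ L * opV4E n chiMat = -(opV4E n chiMat * fuzzyDirac n σ L) := by
        rw [hanti, neg_neg]
      calc fuzzyDirac n σ L (opV4E n chiMat ψ)
          = (fuzzyDirac n σ L * opV4E n chiMat) ψ := rfl
        _ = (-(opV4E n chiMat * fuzzyDirac n σ L)) ψ := by rw [this]
        _ = -(opV4E n chiMat (fuzzyDirac n σ L ψ)) := by
              simp [LinearMap.neg_apply, Module.End.mul_apply]
        _ = (-μ) • opV4E n chiMat ψ := by
              rw [hDψ, LinearMap.map_smul, ← neg_smul]
    · intro h0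
      apply hne
      have : opV4E n chiMat (opV4E n chiMat ψ) = ψ := by
        rw [← Module.End.mul_apply, ← opV4E_mul, chi_sq, opV4E_one, Module.End.one_apply]
      rw [h0, map_zero] at this
      exact this.symm
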